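/- For every integer a ≥ 1 there exist 2a−1 complex matrices B_2,…,B_{2a} of size 2^a × 2^a that are unitary, skew-Hermitian (B_iᴴ = −B_i), and pairwise anticommuting (B_iB_j = −B_jB_i for i ≠ j), i.e., a Hurwitz–Radon family, together with a 2^a × 2^a Hermitian unitary matrix P that is not a scalar multiple of the identity and commutes with every B_i (PB_i = B_iP for all i = 2,…,2a). -/

import Mathlib

open Matrix

namespace HRaux

variable {a : ℕ}

/-- Signed permutation matrix. -/
def pm (f : (Fin a → Bool) → (Fin a → Bool)) (s : (Fin a → Bool) → ℂ) :
    Matrix (Fin a → Bool) (Fin a → Bool) ℂ :=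
  Matrix.of fun x y => if x = f y then s y else 0

lemma pm_congr (f : (Fin a → Bool) → (Fin a → Bool)) {s t : (Fin a → Bool) → ℂ}
    (h : ∀ v, s v = t v) : pm f s = pm f t := by
  have : s = t := funext h
  rw [this]

lemma pm_mul (f g : (Fin a → Bool) → (Fin a → Bool)) (s t : (Fin a → Bool) → ℂ) :
    pm f s * pm g t = pm (f ∘ g) (fun v => s (g v) * t v) := by
  ext x y
  simp only [pm, Matrix.mul_apply, Matrix.of_apply, Function.comp]
  rw [Finset.sum_eq_single (g y) (fun b _ hb => by simp [hb]) (fun h => absurd (Finset.mem_univ _) h)]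
  simp only [if_pos rfl]
  split_ifs <;> ring

lemma pm_conjT (f : (Fin a → Bool) → (Fin a → Bool)) (hf : Function.Involutive f)
    (s : (Fin a → Bool) → ℂ) :
    (pm f s)ᴴ = pm f (fun v => (starRingEnd ℂ) (s (f v))) := by
  ext x y
  simp only [pm, Matrix.conjTranspose_apply, Matrix.of_apply]
  by_cases h : y = f x
  · have hx : x = f y := by rw [h, hf]
    rw [if_pos h, if_pos hx, ← hx]
    rfl
  · have h' : ¬ x = f y := fun hx => h (by rw [hx, hf])
    rw [if_neg h, if_neg h']
    simp

lemma pm_one : (pm (a := a) id (fun _ => 1)) = 1 := by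
  ext x y
  simp only [pm, Matrix.of_apply, Matrix.one_apply, id]

lemma pm_neg (f : (Fin a → Bool) → (Fin a → Bool)) (s : (Fin a → Bool) → ℂ) :
    -(pm f s) = pm f (fun v => -(s v)) := by
  ext x y
  simp only [pm, Matrix.neg_apply, Matrix.of_apply]
  split_ifs <;> simp

/-- flip bit `k`. -/
def flip (k : Fin a) (v : Fin a → Bool) : Fin a → Bool :=
  Function.update v k (!(v k))

lemma flip_apply_self (k : Fin a) (v : Fin a → Bool) : flip k v k = !(v k) := by
  simp [flip]

lemma flip_apply_ne (k j : Fin a) (v : Fin a → Bool) (h : j ≠ k) : flip k v j = v j := by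
  simp [flip, Function.update_of_ne h]

lemma flip_involutive (k : Fin a) : Function.Involutive (flip k) := by
  intro v
  funext j
  by_cases h : j = k
  · subst h; simp [flip]
  · simp [flip, Function.update_of_ne h]

lemma flip_comm (k l : Fin a) : flip k ∘ flip l = flip l ∘ flip k := by
  by_cases hkl : k = l
  · subst hkl; rfl
  funext v j
  simp only [Function.comp]
  by_cases h1 : j = k
  · subst h1
    rw [flip_apply_self, flip_apply_ne l j v hkl, flip_apply_ne l j _ hkl, flip_apply_self]
  · by_cases h2 : j = l
    · subst h2
      rw [flip_apply_ne k j _ (fun h => hkl h.symm), flip_apply_self, flip_apply_self,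
        flip_apply_ne k j v (fun h => hkl h.symm)]
    · rw [flip_apply_ne k j _ h1, flip_apply_ne l j v h2, flip_apply_ne l j _ h2,
        flip_apply_ne k j v h1]

/-- The Z-string sign. -/
def zs (k : Fin a) (v : Fin a → Bool) : ℂ :=
  ∏ j : Fin a, if j < k ∧ v j = true then -1 else 1

lemma zs_conj (k : Fin a) (v : Fin a → Bool) : (starRingEnd ℂ) (zs k v) = zs k v := by
  simp only [zs, map_prod]
  refine Finset.prod_congr rfl fun j _ => ?_
  split_ifs <;> simp

lemma zs_sq (k : Fin a) (v : Fin a → Bool) : zs k v * zs k v = 1 := by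
  simp only [zs, ← Finset.prod_mul_distrib]
  apply Finset.prod_eq_one
  intro j _
  split_ifs <;> ring

lemma zs_flip_ge (k l : Fin a) (hkl : k ≤ l) (v : Fin a → Bool) :
    zs k (flip l v) = zs k v := by
  refine Finset.prod_congr rfl fun j _ => ?_
  by_cases h : j = l
  · subst h
    have : ¬ j < k := not_lt.mpr hkl
    simp [this]
  · rw [flip_apply_ne _ _ _ h]

lemma zs_flip_lt (k l : Fin a) (hlk : l < k) (v : Fin a → Bool) :
    zs k (flip l v) = -zs k v := by
  unfold zs
  rw [← Finset.prod_erase_mul Finset.univ _ (Finset.mem_univ l),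
      ← Finset.prod_erase_mul Finset.univ _ (Finset.mem_univ l)]
  have h1 : ∏ j ∈ Finset.univ.erase l, (if j < k ∧ (flip l v) j = true then (-1 : ℂ) else 1)
      = ∏ j ∈ Finset.univ.erase l, (if j < k ∧ v j = true then (-1 : ℂ) else 1) := by
    refine Finset.prod_congr rfl fun j hj => ?_
    rw [flip_apply_ne _ _ _ (Finset.ne_of_mem_erase hj)]
  rw [h1]
  have h2 : (if l < k ∧ (flip l v) l = true then (-1 : ℂ) else 1)
      = -(if l < k ∧ v l = true then (-1 : ℂ) else 1) := by
    rw [flip_apply_self]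
    cases hv : v l <;> simp [hlk, hv]
  rw [h2]; ring

/-- The sign functions of the gamma matrices: `t = false` is an X-type,
`t = true` a Y-type gamma. -/
def sgn (k : Fin a) (t : Bool) (v : Fin a → Bool) : ℂ :=
  zs k v * (if t then (if v k then -Complex.I else Complex.I) else 1)

/-- The gamma matrices (Hermitian, unitary, pairwise anticommuting). -/
def gam (k : Fin a) (t : Bool) : Matrix (Fin a → Bool) (Fin a → Bool) ℂ :=
  pm (flip k) (sgn k t)

lemma sgn_flip_self_conj (k : Fin a) (t : Bool) (v : Fin a → Bool) :
    (starRingEnd ℂ) (sgn k t (flip k v)) = sgn k t v := by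
  unfold sgn
  rw [RingHom.map_mul, zs_flip_ge k k le_rfl, zs_conj, flip_apply_self]
  cases t <;> cases hv : v k <;> simp [hv, Complex.conj_I]

lemma sgn_flip_self_mul (k : Fin a) (t : Bool) (v : Fin a → Bool) :
    sgn k t (flip k v) * sgn k t v = 1 := by
  have hz := zs_sq k v
  have hI := Complex.I_sq
  unfold sgn
  rw [zs_flip_ge k k le_rfl, flip_apply_self]
  cases t <;> cases hv : v k <;> simp only [hv, Bool.not_true, Bool.not_false,
    if_true, if_false, Bool.false_eq_true, Bool.true_eq_false, ite_true, ite_false] <;>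
    first
      | linear_combination hz
      | linear_combination hz - zs k v * zs k v * hI

lemma sgn_flip_of_lt (k l : Fin a) (t : Bool) (hlk : l < k) (v : Fin a → Bool) :
    sgn k t (flip l v) = -sgn k t v := by
  unfold sgn
  rw [zs_flip_lt k l hlk, flip_apply_ne _ _ _ (ne_of_gt hlk)]
  ring

lemma sgn_flip_of_gt (k l : Fin a) (t : Bool) (hkl : k < l) (v : Fin a → Bool) :
    sgn k t (flip l v) = sgn k t v := by
  unfold sgn
  rw [zs_flip_ge k l (le_of_lt hkl), flip_apply_ne _ _ _ (ne_of_lt hkl)]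

lemma sgn_flip_P (k l : Fin a) (hkl : k ≤ l) (t : Bool) (hne : t = true → k ≠ l)
    (v : Fin a → Bool) : sgn k t (flip l v) = sgn k t v := by
  rcases lt_or_eq_of_le hkl with h | h
  · exact sgn_flip_of_gt k l t h v
  · subst h
    cases ht : t
    · unfold sgn
      rw [zs_flip_ge k k le_rfl]
      simp
    · exact absurd rfl (hne ht)

lemma gam_herm (k : Fin a) (t : Bool) : (gam k t)ᴴ = gam k t := by
  unfold gam
  rw [pm_conjT _ (flip_involutive k)]
  exact pm_congr _ (sgn_flip_self_conj k t)

lemma gam_sq (k : Fin a) (t : Bool) : gam k t * gam k t = 1 := by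
  unfold gam
  have hc : flip k ∘ flip k = id := funext (flip_involutive k)
  rw [pm_mul, hc, pm_congr id (sgn_flip_self_mul k t), pm_one]

lemma gam_anticomm_lt (k l : Fin a) (t u : Bool) (hlk : l < k) :
    gam k t * gam l u = -(gam l u * gam k t) := by
  unfold gam
  rw [pm_mul, pm_mul, pm_neg, flip_comm l k]
  refine pm_congr _ fun v => ?_
  rw [sgn_flip_of_lt k l t hlk, sgn_flip_of_gt l k u hlk]
  ring

lemma gam_anticomm_same (k : Fin a) (t u : Bool) (htu : t ≠ u) :
    gam k t * gam k u = -(gam k u * gam k t) := by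
  unfold gam
  rw [pm_mul, pm_mul, pm_neg]
  refine pm_congr _ fun v => ?_
  unfold sgn
  rw [zs_flip_ge k k le_rfl, flip_apply_self]
  rcases t with _ | _ <;> rcases u with _ | _ <;> simp at htu ⊢ <;>
    cases hv : v k <;> simp [hv] <;> ring

lemma gam_anticomm (k l : Fin a) (t u : Bool) (h : (k, t) ≠ (l, u)) :
    gam k t * gam l u = -(gam l u * gam k t) := by
  by_cases hkl : k = l
  · subst hkl
    exact gam_anticomm_same k t u (fun htu => h (by rw [htu]))
  · rcases lt_or_gt_of_ne hkl with hlt | hgt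
    · rw [gam_anticomm_lt l k u t hlt, neg_neg]
    · exact gam_anticomm_lt k l t u hgt

lemma P_comm_gam (last k : Fin a) (hkl : k ≤ last) (t : Bool) (hne : t = true → k ≠ last) :
    pm (flip last) (fun _ => 1) * gam k t = gam k t * pm (flip last) (fun _ => 1) := by
  unfold gam
  rw [pm_mul, pm_mul, flip_comm last k]
  refine pm_congr _ fun v => ?_
  rw [sgn_flip_P k last hkl t hne]
  ring

end HRaux

/-- For every `a ≥ 1` there is a Hurwitz–Radon family of `2a-1` unitary,
skew-Hermitian, pairwise anticommuting `2^a × 2^a` matrices together with a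
Hermitian unitary non-scalar matrix `P` commuting with all of them. -/
theorem exists_hurwitz_radon_family_with_commuting_hermitian (a : ℕ) (ha : 1 ≤ a) :
    ∃ (B : Fin (2 * a - 1) → Matrix (Fin (2 ^ a)) (Fin (2 ^ a)) ℂ)
      (P : Matrix (Fin (2 ^ a)) (Fin (2 ^ a)) ℂ),
      (∀ i, (B i)ᴴ * B i = 1) ∧
      (∀ i, (B i)ᴴ = -(B i)) ∧
      (∀ i j, i ≠ j → B i * B j = -(B j * B i)) ∧
      Pᴴ = P ∧
      Pᴴ * P = 1 ∧
      (¬ ∃ c : ℂ, P = c • (1 : Matrix (Fin (2 ^ a)) (Fin (2 ^ a)) ℂ)) ∧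
      (∀ i, P * B i = B i * P) := by
  classical
  -- reindexing equivalence
  have hcard : Fintype.card (Fin a → Bool) = 2 ^ a := by
    simp [Fintype.card_fun]
  let e : (Fin a → Bool) ≃ Fin (2 ^ a) :=
    (Fintype.equivFinOfCardEq hcard)
  let F : Matrix (Fin a → Bool) (Fin a → Bool) ℂ ≃ₐ[ℂ]
      Matrix (Fin (2 ^ a)) (Fin (2 ^ a)) ℂ := Matrix.reindexAlgEquiv ℂ ℂ e
  have hFct : ∀ M : Matrix (Fin a → Bool) (Fin a → Bool) ℂ, (F M)ᴴ = F Mᴴ := by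
    intro M
    simp [F, Matrix.conjTranspose_reindex]
  have hFmul : ∀ M N : Matrix (Fin a → Bool) (Fin a → Bool) ℂ,
      F M * F N = F (M * N) := fun M N => (map_mul F M N).symm
  -- index bookkeeping
  let idx : Fin (2 * a - 1) → Fin a × Bool := fun i =>
    if h : (i : ℕ) < a then (⟨i, h⟩, false) else (⟨(i : ℕ) - a, by omega⟩, true)
  have hidx : ∀ i j : Fin (2 * a - 1), i ≠ j → idx i ≠ idx j := by
    intro i j hij
    have hi := i.isLt
    have hj := j.isLt
    have hij' : (i : ℕ) ≠ (j : ℕ) := fun h => hij (Fin.ext h)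
    unfold idx
    by_cases h1 : (i : ℕ) < a <;> by_cases h2 : (j : ℕ) < a <;>
      simp [h1, h2, Prod.ext_iff, Fin.ext_iff] <;> omega
  -- last index
  let last : Fin a := ⟨a - 1, by omega⟩
  have hidx_le : ∀ i : Fin (2 * a - 1), (idx i).1 ≤ last := by
    intro i
    have := (idx i).1.isLt
    simp only [Fin.le_def]
    simp only [last, Fin.val_mk]
    omega
  have hidx_true : ∀ i : Fin (2 * a - 1), (idx i).2 = true → (idx i).1 ≠ last := by
    intro i ht
    have hi := i.isLt
    unfold idx at ht ⊢
    by_cases h1 : (i : ℕ) < a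
    · simp [h1] at ht
    · simp only [h1, dif_neg, not_false_iff]
      intro hcon
      have h3 : (i : ℕ) - a = a - 1 := congrArg Fin.val hcon
      omega
  -- the hermitian unitary P (before reindexing)
  set P0 : Matrix (Fin a → Bool) (Fin a → Bool) ℂ :=
    HRaux.pm (HRaux.flip last) (fun _ => 1) with hP0
  have hP0herm : P0ᴴ = P0 := by
    rw [hP0, HRaux.pm_conjT _ (HRaux.flip_involutive last)]
    exact HRaux.pm_congr _ (fun v => by simp)
  have hP0sq : P0 * P0 = 1 := by
    rw [hP0, HRaux.pm_mul, Function.Involutive.comp_self (HRaux.flip_involutive last)]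
    rw [HRaux.pm_congr (a := a) id (t := fun _ => 1) (fun v => by simp), HRaux.pm_one]
  -- the family
  refine ⟨fun i => Complex.I • F (HRaux.gam (idx i).1 (idx i).2), F P0,
      ?_, ?_, ?_, ?_, ?_, ?_, ?_⟩
  · intro i
    rw [Matrix.conjTranspose_smul, hFct, HRaux.gam_herm, smul_mul_smul_comm, hFmul,
      HRaux.gam_sq, _root_.map_one]
    simp [Complex.star_def, Complex.conj_I, Complex.I_mul_I]
  · intro i
    rw [Matrix.conjTranspose_smul, hFct, HRaux.gam_herm]
    simp [Complex.star_def, Complex.conj_I]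
  · intro i j hij
    have h := HRaux.gam_anticomm (idx i).1 (idx j).1 (idx i).2 (idx j).2
      (by
        intro hcon
        exact hidx i j hij (Prod.ext_iff.mpr
          ⟨congrArg Prod.fst hcon, congrArg Prod.snd hcon⟩))
    rw [smul_mul_smul_comm, smul_mul_smul_comm, hFmul, hFmul, h]
    simp
  · rw [hFct, hP0herm]
  · rw [hFct, hP0herm, hFmul, hP0sq, _root_.map_one]
  · rintro ⟨c, hc⟩
    have hc' : P0 = c • 1 := by
      apply F.injective
      rw [hc, _root_.map_smul, _root_.map_one]
    let v0 : Fin a → Bool := fun _ => false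
    have hne : HRaux.flip last v0 ≠ v0 := by
      intro h
      have := congrFun h last
      rw [HRaux.flip_apply_self] at this
      simp [v0] at this
    have h2 := congrFun (congrFun hc' (HRaux.flip last v0)) v0
    rw [hP0] at h2
    simp only [HRaux.pm, Matrix.of_apply, Matrix.smul_apply, Matrix.one_apply,
      if_neg hne, smul_zero, if_pos rfl] at h2
    exact one_ne_zero h2
  · intro i
    have h := HRaux.P_comm_gam last (idx i).1 (hidx_le i) (idx i).2 (hidx_true i)
    rw [mul_smul_comm, smul_mul_assoc, hFmul, hFmul, hP0, h]
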